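/- Let X be a finite group of order coprime to the characteristic ℓ of a field, and let J be a finite-dimensional nilpotent ideal of a commutative algebra over a complete local ring with residue characteristic ℓ. Then for every i ≥ 1, the group cohomology H^i(X, 1 + J) vanishes, where 1 + J is the multiplicative group {1 + j : j ∈ J}. -/

import Mathlib

open IsLocalRing

/-- The multiplicative group `1 + J` of a (nilpotent) ideal `J` of a commutative ring `R`,
realized as the subgroup of `Rˣ` consisting of the units `u` with `u - 1 ∈ J`. -/
def oneAddIdeal {R : Type*} [CommRing R] (J : Ideal R) : Subgroup Rˣ where
  carrier := { u | (u : R) - 1 ∈ J }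
  one_mem' := by simp
  mul_mem' := by
    intro a b ha hb
    have h : ((a * b : Rˣ) : R) - 1 = (a : R) * ((b : R) - 1) + ((a : R) - 1) := by
      push_cast; ring
    rw [Set.mem_setOf_eq, h]
    exact J.add_mem (J.mul_mem_left _ hb) ha
  inv_mem' := by
    intro a ha
    have h1 : ((a⁻¹ : Rˣ) : R) * (a : R) = 1 := by
      rw [← Units.val_mul, inv_mul_cancel, Units.val_one]
    have h : ((a⁻¹ : Rˣ) : R) - 1 = -(((a⁻¹ : Rˣ) : R) * ((a : R) - 1)) := by
      rw [mul_sub, h1]; ring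
    rw [Set.mem_setOf_eq, h]
    exact J.neg_mem (J.mul_mem_left _ ha)



variable {α : Type*} {n : ℕ}

theorem aux_snoc_comp_succ (g : Fin (n + 1) → α) (s : α) :
    (fun (i : Fin (n + 1)) => (Fin.snoc g s : Fin (n + 2) → α) i.succ)
      = Fin.snoc (fun (i : Fin n) => g i.succ) s := by
  funext i
  refine Fin.lastCases ?_ (fun j => ?_) i
  · simp [Fin.succ_last]
  · simp only [Fin.snoc_castSucc, Fin.succ_castSucc, Fin.snoc_castSucc]

theorem aux_snoc_zero (g : Fin (n + 1) → α) (s : α) :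
    (Fin.snoc g s : Fin (n + 2) → α) 0 = g 0 := by
  show (Fin.snoc g s : Fin (n + 2) → α) (Fin.castSucc 0) = g 0
  rw [Fin.snoc_castSucc]

theorem aux_contract_lt (j : Fin (n + 1)) (hj : (j : ℕ) < n) (op : α → α → α)
    (x : Fin (n + 1) → α) (s : α) :
    Fin.contractNth (Fin.castSucc j) op (Fin.snoc x s) =
      Fin.snoc (Fin.contractNth j op x) s := by
  funext i
  refine Fin.lastCases ?_ (fun k => ?_) i
  · rw [Fin.snoc_last, Fin.contractNth_apply_of_gt _ _ _ _ (by simpa using hj),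
      Fin.succ_last, Fin.snoc_last]
  · rcases lt_trichotomy (k : ℕ) (j : ℕ) with h | h | h
    · rw [Fin.snoc_castSucc, Fin.contractNth_apply_of_lt _ _ _ _ (by simpa using h),
        Fin.contractNth_apply_of_lt _ _ _ _ h, Fin.snoc_castSucc]
    · rw [Fin.snoc_castSucc, Fin.contractNth_apply_of_eq _ _ _ _ (by simpa using h),
        Fin.contractNth_apply_of_eq _ _ _ _ h, Fin.succ_castSucc, Fin.snoc_castSucc,
        Fin.snoc_castSucc]
    · rw [Fin.snoc_castSucc, Fin.contractNth_apply_of_gt _ _ _ _ (by simpa using h),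
        Fin.contractNth_apply_of_gt _ _ _ _ h, Fin.succ_castSucc, Fin.snoc_castSucc]

theorem aux_contract_last (op : α → α → α) (x : Fin (n + 1) → α) (s : α) :
    Fin.contractNth (Fin.castSucc (Fin.last n)) op (Fin.snoc x s) =
      Fin.snoc (Fin.contractNth (Fin.last n) op x) (op (x (Fin.last n)) s) := by
  funext i
  refine Fin.lastCases ?_ (fun k => ?_) i
  · rw [Fin.snoc_last, Fin.contractNth_apply_of_eq _ _ _ _ (by simp), Fin.snoc_castSucc,
      Fin.succ_last, Fin.snoc_last]
  · rw [Fin.snoc_castSucc, Fin.contractNth_apply_of_lt _ _ _ _ (by simp),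
      Fin.contractNth_apply_of_lt _ _ _ _ (by simp), Fin.snoc_castSucc]

theorem aux_contract_top (op : α → α → α) (x : Fin (n + 1) → α) (s : α) :
    Fin.contractNth (Fin.last (n + 1)) op (Fin.snoc x s) = x := by
  funext i
  rw [Fin.contractNth_apply_of_lt _ _ _ _ (by simp; omega), Fin.snoc_castSucc]

open CategoryTheory CategoryTheory.Limits groupCohomology in
theorem vanish_of_smul_card_bijective {k G : Type} [CommRing k] [Group G] [Fintype G]
    (A : Rep k G)
    (hbij : Function.Bijective (fun a : A => Fintype.card G • a))
    (i : ℕ) (hi : 1 ≤ i) : Subsingleton (groupCohomology A i) := by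
  obtain ⟨n, rfl⟩ : ∃ n, i = n + 1 := ⟨i - 1, (Nat.succ_pred_eq_of_pos hi).symm⟩
  set N := Fintype.card G with hN
  have hexact : (inhomogeneousCochains A).ExactAt (n + 1) := by
    rw [HomologicalComplex.exactAt_iff' _ n (n + 1) (n + 2)
      ((ComplexShape.up ℕ).prev_eq' (by simp)) ((ComplexShape.up ℕ).next_eq' (by simp))]
    rw [ShortComplex.moduleCat_exact_iff]
    intro f hf
    -- f is an (n+1)-cochain with d f = 0
    have hf' : inhomogeneousCochains.d A (n + 1) f = 0 := by
      have : (inhomogeneousCochains A).d (n + 1) (n + 2) f = 0 := hf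
      rwa [inhomogeneousCochains.d_def] at this
    -- the candidate (scaled) preimage
    set hf0 : (Fin n → G) → A := fun x => (-1 : k) ^ (n + 1) • ∑ s : G, f (Fin.snoc x s)
      with hf0_def
    -- each cocycle identity, evaluated at snoc g s
    have hterm : ∀ (g : Fin (n + 1) → G) (s : G),
        A.ρ (g 0) (f (Fin.snoc (fun i => g i.succ) s))
          + ((∑ j : Fin (n + 1), (-1 : k) ^ ((j : ℕ) + 1) •
              f (Fin.contractNth (Fin.castSucc j) (· * ·) (Fin.snoc g s)))
          + (-1 : k) ^ (n + 2) • f g) = 0 := by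
      intro g s
      have h0 : inhomogeneousCochains.d A (n + 1) f (Fin.snoc g s) = 0 := by
        rw [hf']; rfl
      erw [inhomogeneousCochains.d_hom_apply] at h0
      rw [Fin.sum_univ_castSucc] at h0
      simp only [Fin.coe_castSucc, Fin.val_last, aux_contract_top, aux_snoc_zero,
        aux_snoc_comp_succ] at h0
      exact h0
    -- sum the cocycle identity over s
    have hsum : ∀ g : Fin (n + 1) → G,
        A.ρ (g 0) (∑ s : G, f (Fin.snoc (fun i => g i.succ) s))
          + ((∑ j : Fin (n + 1), (-1 : k) ^ ((j : ℕ) + 1) •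
              ∑ s : G, f (Fin.snoc (Fin.contractNth j (· * ·) g) s))
          + N • ((-1 : k) ^ (n + 2) • f g)) = 0 := by
      intro g
      have h1 : ∑ s : G, (A.ρ (g 0) (f (Fin.snoc (fun i => g i.succ) s))
          + ((∑ j : Fin (n + 1), (-1 : k) ^ ((j : ℕ) + 1) •
              f (Fin.contractNth (Fin.castSucc j) (· * ·) (Fin.snoc g s)))
          + (-1 : k) ^ (n + 2) • f g)) = 0 :=
        Finset.sum_eq_zero fun s _ => hterm g s
      rw [Finset.sum_add_distrib, Finset.sum_add_distrib, ← map_sum, Finset.sum_const,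
        Finset.card_univ, Finset.sum_comm] at h1
      simp only [← Finset.smul_sum] at h1
      -- identify the inner sums
      have h2 : ∀ j : Fin (n + 1),
          (∑ s : G, f (Fin.contractNth (Fin.castSucc j) (· * ·) (Fin.snoc g s)))
            = ∑ s : G, f (Fin.snoc (Fin.contractNth j (· * ·) g) s) := by
        intro j
        rcases lt_or_eq_of_le (Nat.lt_succ_iff.mp j.isLt) with h | h
        · exact Finset.sum_congr rfl fun s _ => by rw [aux_contract_lt j h]
        · have hj : j = Fin.last n := Fin.ext h
          subst hj
          simp only [aux_contract_last]
          exact Fintype.sum_equiv (Equiv.mulLeft (g (Fin.last n))) _ _ (fun s => rfl)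
      simp only [h2] at h1
      exact h1
    -- hence d hf0 = N • f
    have key : inhomogeneousCochains.d A n hf0 = N • f := by
      funext g
      rw [inhomogeneousCochains.d_hom_apply]
      simp only [hf0_def, map_smul, smul_comm ((-1 : k) ^ ((_ : ℕ) + 1))
        ((-1 : k) ^ (n + 1))]
      rw [← Finset.smul_sum, ← smul_add]
      have := hsum g
      have h3 : A.ρ (g 0) (∑ s : G, f (Fin.snoc (fun i => g i.succ) s))
          + (∑ j : Fin (n + 1), (-1 : k) ^ ((j : ℕ) + 1) •
              ∑ s : G, f (Fin.snoc (Fin.contractNth j (· * ·) g) s))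
          = -(N • ((-1 : k) ^ (n + 2) • f g)) := by
        rw [eq_neg_iff_add_eq_zero, add_assoc]; exact this
      rw [h3]
      rw [smul_comm N ((-1 : k) ^ (n + 2)) (f g), ← smul_neg, smul_smul, ← pow_add,
        Odd.neg_one_pow ⟨n + 1, by ring⟩, neg_one_smul, neg_neg]
      rfl
    -- use bijectivity to divide by N
    obtain ⟨p, hp⟩ : ∃ p : (Fin n → G) → A, (fun x => N • p x) = hf0 := by
      choose p hp using fun x => hbij.2 (hf0 x)
      exact ⟨p, funext hp⟩
    refine ⟨p, ?_⟩
    show (inhomogeneousCochains A).d n (n + 1) p = f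
    rw [inhomogeneousCochains.d_def]
    have hNp : (N • p : (Fin n → G) → A) = hf0 := funext fun x => congrFun hp x
    have h5 : N • (inhomogeneousCochains.d A n p : (Fin (n + 1) → G) → A) = N • f := by
      rw [← map_nsmul, hNp, key]
    funext g
    exact hbij.1 (congrFun h5 g)
  have hzero : IsZero (groupCohomology A (n + 1)) :=
    (HomologicalComplex.exactAt_iff_isZero_homology _ _).mp hexact
  have e := hzero.iso (ModuleCat.isZero_of_subsingleton (ModuleCat.of k PUnit))
  have h6 : ∀ x : groupCohomology A (n + 1), e.inv (e.hom x) = x := fun x => by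
    have h7 : (e.hom ≫ e.inv) x = x := by rw [e.hom_inv_id]; rfl
    exact h7
  refine ⟨fun a b => ?_⟩
  have hab : e.hom a = e.hom b := Subsingleton.elim _ _
  rw [← h6 a, ← h6 b, hab]
section Expand


variable {R : Type*} [CommRing R]

theorem aux_expand (J : Ideal R) (k M : ℕ) {b : R} (hb : b ∈ J ^ k) :
    (1 + b) ^ (M + 1) - 1 - (M + 1) * b ∈ J ^ (k + k) := by
  have hb2 : b ^ 2 ∈ J ^ (k + k) := by
    rw [pow_add J k k, sq]
    exact Ideal.mul_mem_mul hb hb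
  have hmem : ∑ i ∈ Finset.range M,
      b ^ (i + 2) * 1 ^ (M + 1 - (i + 2)) * ((M + 1).choose (i + 2) : R) ∈ J ^ (k + k) := by
    refine Ideal.sum_mem _ fun i _ => ?_
    refine Ideal.mul_mem_right _ _ (Ideal.mul_mem_right _ _ ?_)
    rw [pow_add b i 2]
    exact Ideal.mul_mem_left _ _ hb2
  have heq : (1 + b) ^ (M + 1) - 1 - (M + 1) * b
      = ∑ i ∈ Finset.range M,
          b ^ (i + 2) * 1 ^ (M + 1 - (i + 2)) * ((M + 1).choose (i + 2) : R) := by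
    rw [add_comm 1 b, add_pow, Finset.sum_range_succ', Finset.sum_range_succ']
    simp only [pow_zero, one_pow, one_mul, mul_one, Nat.choose_zero_right, Nat.cast_one,
      Nat.choose_one_right, pow_one, zero_add]
    push_cast
    ring
  rw [heq]
  exact hmem

theorem aux_inj (J : Ideal R) (m : ℕ) (hm : J ^ m = ⊥)
    {N : ℕ} (hNu : IsUnit (N : R)) (M : ℕ) (hNM : N = M + 1) :
    ∀ d k, 1 ≤ k → m ≤ k + d → ∀ u : Rˣ, (u : R) - 1 ∈ J ^ k → u ^ N = 1 → u = 1 := by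
  intro d
  induction d with
  | zero =>
    intro k _ hmk u hu _
    have hb : (u : R) - 1 = 0 := by
      have := (Ideal.pow_le_pow_right (by omega : m ≤ k + 0)) hu
      rwa [hm, Ideal.mem_bot] at this
    exact Units.ext (by rw [Units.val_one]; exact sub_eq_zero.mp hb)
  | succ d ih =>
    intro k hk hmk u hu hpow
    have hub : (u : R) = 1 + ((u : R) - 1) := by ring
    have h1 : (1 + ((u : R) - 1)) ^ N - 1 - N * ((u : R) - 1) ∈ J ^ (k + k) := by
      rw [hNM]
      exact_mod_cast aux_expand J k M hu
    have h2 : (1 + ((u : R) - 1)) ^ N = 1 := by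
      rw [← hub, ← Units.val_pow_eq_pow_val, hpow, Units.val_one]
    have h3 : -((N : R) * ((u : R) - 1)) ∈ J ^ (k + k) := by
      rw [h2] at h1
      simpa using h1
    have h3' : (N : R) * ((u : R) - 1) ∈ J ^ (k + k) := by
      simpa using (J ^ (k + k)).neg_mem h3
    have h4 : (u : R) - 1 ∈ J ^ (k + 1) := by
      have h5 := Ideal.mul_mem_left _ (↑hNu.unit⁻¹ : R) h3'
      rw [← mul_assoc, IsUnit.val_inv_mul, one_mul] at h5
      exact Ideal.pow_le_pow_right (by omega : k + 1 ≤ k + k) h5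
    exact ih (k + 1) (by omega) (by omega) u h4 hpow

theorem aux_surj (J : Ideal R) (m : ℕ) (hm : J ^ m = ⊥)
    {N : ℕ} (hNu : IsUnit (N : R)) (M : ℕ) (hNM : N = M + 1) :
    ∀ d k, 1 ≤ k → m ≤ k + d → ∀ w : Rˣ, (w : R) - 1 ∈ J ^ k →
      ∃ u : Rˣ, (u : R) - 1 ∈ J ^ k ∧ u ^ N = w := by
  intro d
  induction d with
  | zero =>
    intro k _ hmk w hw
    have hb : (w : R) - 1 = 0 := by
      have := (Ideal.pow_le_pow_right (by omega : m ≤ k + 0)) hw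
      rwa [hm, Ideal.mem_bot] at this
    have hw1 : w = 1 := Units.ext (by rw [Units.val_one]; exact sub_eq_zero.mp hb)
    exact ⟨1, by simp, by rw [one_pow, hw1]⟩
  | succ d ih =>
    intro k hk hmk w hw
    set t : R := (↑hNu.unit⁻¹ : R) * ((w : R) - 1) with htdef
    have htJk : t ∈ J ^ k := Ideal.mul_mem_left _ _ hw
    have htJ : t ∈ J := Ideal.pow_le_self (by omega) htJk
    have htnil : IsNilpotent t := by
      refine ⟨m, ?_⟩
      have := Ideal.pow_mem_pow htJ m
      rwa [hm, Ideal.mem_bot] at this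
    have hvu : IsUnit (1 + t) := htnil.isUnit_one_add
    have hv1 : (hvu.unit : R) = 1 + t := hvu.unit_spec
    have hvmem : (hvu.unit : R) - 1 ∈ J ^ k := by rw [hv1]; simpa using htJk
    have hNt : (N : R) * t = (w : R) - 1 := by
      rw [htdef, ← mul_assoc, IsUnit.mul_val_inv, one_mul]
    have hc : (hvu.unit : R) ^ N - (w : R) ∈ J ^ (k + 1) := by
      have h1 : (1 + t) ^ N - 1 - N * t ∈ J ^ (k + k) := by
        rw [hNM]
        exact_mod_cast aux_expand J k M htJk
      have h2 : (hvu.unit : R) ^ N - (w : R) = (1 + t) ^ N - 1 - N * t := by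
        rw [hv1, hNt]; ring
      rw [h2]
      exact Ideal.pow_le_pow_right (by omega : k + 1 ≤ k + k) h1
    have hz : ((hvu.unit ^ N : Rˣ) : R) * (((hvu.unit ^ N)⁻¹ : Rˣ) : R) = 1 := by
      rw [← Units.val_mul, mul_inv_cancel, Units.val_one]
    have hw' : ((w * (hvu.unit ^ N)⁻¹ : Rˣ) : R) - 1 ∈ J ^ (k + 1) := by
      have heq : ((w * (hvu.unit ^ N)⁻¹ : Rˣ) : R) - 1
          = ((w : R) - ((hvu.unit ^ N : Rˣ) : R)) * (((hvu.unit ^ N)⁻¹ : Rˣ) : R) := by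
        rw [sub_mul, hz, Units.val_mul]
      rw [heq]
      refine Ideal.mul_mem_right _ _ ?_
      have : (w : R) - ((hvu.unit ^ N : Rˣ) : R)
          = -((hvu.unit : R) ^ N - (w : R)) := by
        rw [Units.val_pow_eq_pow_val]; ring
      rw [this]
      exact (J ^ (k + 1)).neg_mem hc
    obtain ⟨u', hu'1, hu'2⟩ := ih (k + 1) (by omega) (by omega) (w * (hvu.unit ^ N)⁻¹) hw'
    refine ⟨u' * hvu.unit, ?_, ?_⟩
    · have heq2 : ((u' * hvu.unit : Rˣ) : R) - 1
          = ((u' : R) - 1) * (hvu.unit : R) + ((hvu.unit : R) - 1) := by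
        push_cast; ring
      rw [heq2]
      exact (J ^ k).add_mem
        (Ideal.mul_mem_right _ _ (Ideal.pow_le_pow_right (by omega : k ≤ k + 1) hu'1)) hvmem
    · rw [mul_pow, hu'2, inv_mul_cancel_right]

theorem aux_pow_bijective (J : Ideal R) (hnil : IsNilpotent J)
    {N : ℕ} (hNu : IsUnit (N : R)) (hN1 : 1 ≤ N) :
    Function.Bijective (fun u : ↥(oneAddIdeal J) => u ^ N) := by
  obtain ⟨m, hm⟩ := hnil
  have hm' : J ^ m = ⊥ := hm
  obtain ⟨M, hNM⟩ : ∃ M, N = M + 1 := ⟨N - 1, by omega⟩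
  constructor
  · intro u v h
    have hmem : ((u * v⁻¹ : ↥(oneAddIdeal J)) : Rˣ) ∈ oneAddIdeal J := (u * v⁻¹).2
    have hmem' : (((u * v⁻¹ : ↥(oneAddIdeal J)) : Rˣ) : R) - 1 ∈ J ^ 1 := by
      rw [pow_one]; exact hmem
    have hpow : ((u * v⁻¹ : ↥(oneAddIdeal J)) : Rˣ) ^ N = 1 := by
      have hval : (u : Rˣ) ^ N = (v : Rˣ) ^ N := by
        have := congrArg (Subtype.val) h
        simpa using this
      have hco : ((u * v⁻¹ : ↥(oneAddIdeal J)) : Rˣ) = (u : Rˣ) * ((v : Rˣ))⁻¹ := rfl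
      rw [hco, mul_pow, inv_pow, ← hval, mul_inv_cancel]
    have := aux_inj J m hm' hNu M hNM m 1 (by omega) (by omega) _ hmem' hpow
    have huv : (u : Rˣ) * (v : Rˣ)⁻¹ = 1 := this
    exact Subtype.ext (mul_inv_eq_one.mp huv)
  · intro w
    have hw : ((w : Rˣ) : R) - 1 ∈ J ^ 1 := by rw [pow_one]; exact w.2
    obtain ⟨u, hu1, hu2⟩ := aux_surj J m hm' hNu M hNM m 1 (by omega) (by omega) (w : Rˣ) hw
    have humem : u ∈ oneAddIdeal J := by rw [← pow_one J]; exact hu1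
    refine ⟨⟨u, humem⟩, ?_⟩
    apply Subtype.ext
    simpa using hu2

end Expand

theorem aux_isUnit_card {ℓ : ℕ} [Fact ℓ.Prime] {𝒪 : Type} [CommRing 𝒪] [IsLocalRing 𝒪]
    [CharP (IsLocalRing.ResidueField 𝒪) ℓ] {R : Type} [CommRing R] [Algebra 𝒪 R]
    {N : ℕ} (h : N.Coprime ℓ) : IsUnit (N : R) := by
  have hdvd : ¬ (ℓ ∣ N) := (Nat.Prime.coprime_iff_not_dvd Fact.out).mp (Nat.Coprime.symm h)
  have hres : (IsLocalRing.residue 𝒪) (N : 𝒪) ≠ 0 := by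
    rw [map_natCast]
    exact fun h0 => hdvd ((CharP.cast_eq_zero_iff (IsLocalRing.ResidueField 𝒪) ℓ N).mp h0)
  have hmem : (N : 𝒪) ∉ IsLocalRing.maximalIdeal 𝒪 :=
    fun hmem => hres (Ideal.Quotient.eq_zero_iff_mem.mpr hmem)
  have hunit : IsUnit (N : 𝒪) := by
    by_contra hnu
    exact hmem ((IsLocalRing.mem_maximalIdeal _).mpr (mem_nonunits_iff.mpr hnu))
  have hcast : (N : R) = algebraMap 𝒪 R (N : 𝒪) := by rw [map_natCast]
  rw [hcast]
  exact hunit.map (algebraMap 𝒪 R)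

/-- Let `X` be a finite group of order coprime to the residue
characteristic `ℓ` of a complete local ring `𝒪`, and let `J` be a finite-dimensional
nilpotent ideal of a commutative `𝒪`-algebra `R`, stable under an action of `X` on `R`
by ring automorphisms.  Then for every `i ≥ 1` the group cohomology `Hⁱ(X, 1 + J)`
vanishes, where `1 + J = {1 + j : j ∈ J}` is regarded as a group under multiplication
(with the `X`-action `ρ` induced by the action of `X` on `R`). -/
theorem stmt1 {ℓ : ℕ} [Fact ℓ.Prime]
    {𝒪 : Type} [CommRing 𝒪] [IsLocalRing 𝒪]
    [IsAdicComplete (IsLocalRing.maximalIdeal 𝒪) 𝒪]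
    [CharP (IsLocalRing.ResidueField 𝒪) ℓ]
    {R : Type} [CommRing R] [Algebra 𝒪 R]
    {X : Type} [Group X] [Fintype X] (hX : (Fintype.card X).Coprime ℓ)
    [MulSemiringAction X R]
    (J : Ideal R) [Module.Finite 𝒪 ↥J] (hnil : IsNilpotent J)
    (hJstable : ∀ (x : X), ∀ r ∈ J, x • r ∈ J)
    (ρ : Representation ℤ X (Additive ↥(oneAddIdeal J)))
    (hρ : ∀ (x : X) (u : ↥(oneAddIdeal J)),
      ((((ρ x (Additive.ofMul u)).toMul : ↥(oneAddIdeal J)) : Rˣ) : R) = x • (((u : Rˣ)) : R))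
    (i : ℕ) (hi : 1 ≤ i) :
    Subsingleton (groupCohomology (Rep.of ρ) i) := by
  have hN1 : 1 ≤ Fintype.card X := Fintype.card_pos
  have hNu : IsUnit ((Fintype.card X : ℕ) : R) := aux_isUnit_card (𝒪 := 𝒪) hX
  have hpow := aux_pow_bijective J hnil hNu hN1
  have hbij : Function.Bijective
      (fun a : Additive ↥(oneAddIdeal J) => Fintype.card X • a) := by
    have h1 : (fun a : Additive ↥(oneAddIdeal J) => Fintype.card X • a)
        = fun a => Additive.ofMul ((Additive.toMul a) ^ Fintype.card X) := rfl
    rw [h1]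
    exact (Additive.ofMul.bijective.comp hpow).comp Additive.toMul.bijective
  exact vanish_of_smul_card_bijective (Rep.of ρ) hbij i hi
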